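/- Let m ≥ 5, x ≥ 1 an integer, and let r be an integer with 0 < r < m-2, gcd(r, m-2) = 1 and 2r ≠ m-2. Then the set {y ∈ ℤ : 0 < P_m^{(r)}(y) ≤ (m-2)x²/2} has exactly 2x - 1 elements. -/
import Mathlib

/-- The generalized shifted `m`-gonal number of level `r` at `x`. -/
def shiftedPolygonal (m r x : ℤ) : ℤ := ((m - 2) * x ^ 2 - (m - 2 - 2 * r) * x) / 2

lemma two_shifted (m r y : ℤ) :
    2 * shiftedPolygonal m r y = (m - 2) * y ^ 2 - (m - 2 - 2 * r) * y := by
  have hdvd : (2:ℤ) ∣ ((m - 2) * y ^ 2 - (m - 2 - 2 * r) * y) := by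
    obtain ⟨k, hk⟩ := Int.even_mul_succ_self (y - 1)
    exact ⟨(m - 2) * k + r * y, by linear_combination (m - 2) * hk⟩
  unfold shiftedPolygonal
  exact Int.mul_ediv_cancel' hdvd

theorem stmt_9 (m r x : ℤ) (hm : 5 ≤ m) (hx : 1 ≤ x) (hr0 : 0 < r) (hr1 : r < m - 2)
    (hgcd : Int.gcd r (m - 2) = 1) (hne : 2 * r ≠ m - 2) :
    ({y : ℤ | 0 < shiftedPolygonal m r y ∧
        2 * shiftedPolygonal m r y ≤ (m - 2) * x ^ 2}.ncard : ℤ) = 2 * x - 1 := by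
  rcases lt_trichotomy (m - 2 - 2 * r) 0 with hb | hb | hb
  · -- b < 0 : set is Icc (-x) (x-1) minus 0
    have hset : {y : ℤ | 0 < shiftedPolygonal m r y ∧
        2 * shiftedPolygonal m r y ≤ (m - 2) * x ^ 2}
        = ↑((Finset.Icc (-x) (x - 1)).erase 0) := by
      ext y
      simp only [Set.mem_setOf_eq, Finset.coe_erase, Finset.mem_coe, Set.mem_diff,
        Finset.mem_Icc, Set.mem_singleton_iff]
      have hk := two_shifted m r y
      constructor
      · rintro ⟨h1, h2⟩
        have h1' : 0 < (m - 2) * y ^ 2 - (m - 2 - 2 * r) * y := by omega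
        have h2' : (m - 2) * y ^ 2 - (m - 2 - 2 * r) * y ≤ (m - 2) * x ^ 2 := by omega
        have e3 : (0:ℤ) ≤ (m - 5) * (x - 1) := by
          apply mul_nonneg <;> linarith
        refine ⟨⟨?_, ?_⟩, ?_⟩
        · by_contra h; push_neg at h
          have hy : y ≤ -x - 1 := by omega
          have e1 : (0:ℤ) ≤ (m - 2) * ((-y - x - 1) * (-y + x)) := by
            apply mul_nonneg (by linarith)
            apply mul_nonneg <;> linarith
          have e2 : (0:ℤ) ≤ ((m - 2) + (m - 2 - 2 * r)) * (-y) := by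
            apply mul_nonneg <;> linarith
          linarith [e1, e2, e3, h2']
        · by_contra h; push_neg at h
          have hy : x ≤ y := by omega
          have e1 : (0:ℤ) ≤ (m - 2) * ((y - x) * (y + x)) := by
            apply mul_nonneg (by linarith)
            apply mul_nonneg <;> linarith
          have e2 : (0:ℤ) < (-(m - 2 - 2 * r)) * y := by
            apply mul_pos <;> linarith
          linarith [e1, e2, e3, h2']
        · rintro rfl; simp at h1'
      · rintro ⟨⟨h1, h2⟩, h0⟩
        have hpos : 0 < (m - 2) * y ^ 2 - (m - 2 - 2 * r) * y := by
          rcases lt_or_gt_of_ne h0 with h | h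
          · have p1 : (0:ℤ) ≤ (m - 2) * ((-y) * (-y - 1)) := by
              apply mul_nonneg (by linarith)
              apply mul_nonneg <;> linarith
            have p2 : (0:ℤ) ≤ (2 * m - 6 - 2 * r) * (-y) := by
              apply mul_nonneg <;> linarith
            linarith [p1, p2]
          · have p1 : (0:ℤ) ≤ (m - 2) * (y * (y - 1)) := by
              apply mul_nonneg (by linarith)
              apply mul_nonneg <;> linarith
            have p2 : (0:ℤ) ≤ (-(m - 2 - 2 * r)) * y := by
              apply mul_nonneg <;> linarith
            have p3 : (0:ℤ) ≤ (m - 5) * (y - 1) := by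
              apply mul_nonneg <;> linarith
            linarith [p1, p2, p3]
        refine ⟨by omega, ?_⟩
        rw [hk]
        rcases lt_or_gt_of_ne h0 with h | h
        · nlinarith [mul_nonneg (by linarith : (0:ℤ) ≤ x + y) (by linarith : (0:ℤ) ≤ x - y)]
        · nlinarith [mul_nonneg (by linarith : (0:ℤ) ≤ x - 1 - y) (by linarith : (0:ℤ) ≤ x - 1 + y)]
    rw [hset, Set.ncard_coe_finset,
      Finset.card_erase_of_mem (by simp [Finset.mem_Icc]; omega), Int.card_Icc]
    omega
  · omega
  · -- b > 0 : set is Icc (1-x) x minus 0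
    have hset : {y : ℤ | 0 < shiftedPolygonal m r y ∧
        2 * shiftedPolygonal m r y ≤ (m - 2) * x ^ 2}
        = ↑((Finset.Icc (1 - x) x).erase 0) := by
      ext y
      simp only [Set.mem_setOf_eq, Finset.coe_erase, Finset.mem_coe, Set.mem_diff,
        Finset.mem_Icc, Set.mem_singleton_iff]
      have hk := two_shifted m r y
      constructor
      · rintro ⟨h1, h2⟩
        have h1' : 0 < (m - 2) * y ^ 2 - (m - 2 - 2 * r) * y := by omega
        have h2' : (m - 2) * y ^ 2 - (m - 2 - 2 * r) * y ≤ (m - 2) * x ^ 2 := by omega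
        have e3 : (0:ℤ) ≤ (m - 5) * (x - 1) := by
          apply mul_nonneg <;> linarith
        refine ⟨⟨?_, ?_⟩, ?_⟩
        · by_contra h; push_neg at h
          have hy : y ≤ -x := by omega
          have e1 : (0:ℤ) ≤ (m - 2) * ((-y - x) * (-y + x)) := by
            apply mul_nonneg (by linarith)
            apply mul_nonneg <;> linarith
          have e2 : (0:ℤ) < (m - 2 - 2 * r) * (-y) := by
            apply mul_pos <;> linarith
          linarith [e1, e2, e3, h2']
        · by_contra h; push_neg at h
          have hy : x + 1 ≤ y := by omega
          have e1 : (0:ℤ) ≤ (m - 2) * ((y - x - 1) * (y + x)) := by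
            apply mul_nonneg (by linarith)
            apply mul_nonneg <;> linarith
          have e2 : (0:ℤ) ≤ (2 * r) * y := by
            apply mul_nonneg <;> linarith
          linarith [e1, e2, e3, h2']
        · rintro rfl; simp at h1'
      · rintro ⟨⟨h1, h2⟩, h0⟩
        have hpos : 0 < (m - 2) * y ^ 2 - (m - 2 - 2 * r) * y := by
          rcases lt_or_gt_of_ne h0 with h | h
          · have p1 : (0:ℤ) ≤ (m - 2) * ((-y) * (-y - 1)) := by
              apply mul_nonneg (by linarith)
              apply mul_nonneg <;> linarith
            have p2 : (0:ℤ) ≤ (m - 2 - 2 * r) * (-y) := by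
              apply mul_nonneg <;> linarith
            have p3 : (0:ℤ) ≤ (m - 5) * (-y - 1) := by
              apply mul_nonneg <;> linarith
            linarith [p1, p2, p3]
          · have p1 : (0:ℤ) ≤ (m - 2) * (y * (y - 1)) := by
              apply mul_nonneg (by linarith)
              apply mul_nonneg <;> linarith
            have p3 : (0:ℤ) ≤ r * (y - 1) := by
              apply mul_nonneg <;> linarith
            linarith [p1, p3]
        refine ⟨by omega, ?_⟩
        rw [hk]
        rcases lt_or_gt_of_ne h0 with h | h
        · nlinarith [mul_nonneg (by linarith : (0:ℤ) ≤ x - 1 + y) (by linarith : (0:ℤ) ≤ x - 1 - y)]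
        · nlinarith [mul_nonneg (by linarith : (0:ℤ) ≤ x - y) (by linarith : (0:ℤ) ≤ x + y)]
    rw [hset, Set.ncard_coe_finset,
      Finset.card_erase_of_mem (by simp [Finset.mem_Icc]; omega), Int.card_Icc]
    omega
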